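/- For every N ∈ ℕ and l ∈ ℕ, the ratio A_N(r,l) / (r (log r)^{l-1}) tends to 1/(l-1)! as r → ∞. -/

import Mathlib

open Filter Real Set

/-- `A N l r` is the number of tuples `(n_1, ..., n_l)` of natural numbers
with each `n_j ≥ N` and `n_1 ⋯ n_l ≤ r`. -/
noncomputable def A (N l : ℕ) (r : ℝ) : ℕ :=
  {x : Fin l → ℕ | (∀ j, N ≤ x j) ∧ ((∏ j, x j : ℕ) : ℝ) ≤ r}.ncard

set_option maxHeartbeats 1000000


variable {N : ℕ}

lemma coord_le_floor (hN : 1 ≤ N) {l : ℕ} {r : ℝ} {x : Fin l → ℕ}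
    (hx : x ∈ {x : Fin l → ℕ | (∀ j, N ≤ x j) ∧ ((∏ j, x j : ℕ) : ℝ) ≤ r}) (j : Fin l) :
    x j ≤ ⌊r⌋₊ := by
  refine le_trans ?_ (Nat.le_floor hx.2)
  exact Finset.single_le_prod' (fun i _ => le_trans hN (hx.1 i)) (Finset.mem_univ j)

lemma A_set_finite (hN : 1 ≤ N) (l : ℕ) (r : ℝ) :
    {x : Fin l → ℕ | (∀ j, N ≤ x j) ∧ ((∏ j, x j : ℕ) : ℝ) ≤ r}.Finite := by
  apply Set.Finite.subset (Set.Finite.pi (fun _ : Fin l => Set.finite_Iic ⌊r⌋₊))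
  intro x hx
  rw [Set.mem_pi]
  exact fun j _ => coord_le_floor hN hx j

lemma A_one (hN : 1 ≤ N) (r : ℝ) : A N 1 r = ⌊r⌋₊ + 1 - N := by
  have h : {x : Fin 1 → ℕ | (∀ j, N ≤ x j) ∧ ((∏ j, x j : ℕ) : ℝ) ≤ r}
      = (fun n => fun _ : Fin 1 => n) '' (Set.Icc N ⌊r⌋₊) := by
    ext x
    simp only [Set.mem_setOf_eq, Set.mem_image, Set.mem_Icc]
    constructor
    · rintro ⟨h1, h2⟩
      refine ⟨x 0, ⟨h1 0, ?_⟩, ?_⟩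
      · refine Nat.le_floor ?_
        rwa [← Fin.prod_univ_one x]
      · funext j
        rw [Fin.fin_one_eq_zero j]
    · rintro ⟨n, ⟨hn1, hn2⟩, rfl⟩
      refine ⟨fun _ => hn1, ?_⟩
      rw [Fin.prod_univ_one]
      by_cases hr : 0 ≤ r
      · exact le_trans (Nat.cast_le.2 hn2) (Nat.floor_le hr)
      · exfalso
        simp [Nat.floor_of_nonpos (le_of_lt (not_le.1 hr))] at hn2
        omega
  rw [A, h, Set.ncard_image_of_injective _ (fun a b hab => congrFun hab 0)]
  rw [← Nat.card_Icc, ← Set.ncard_coe_finset, Finset.coe_Icc]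

lemma A_succ (hN : 1 ≤ N) (l : ℕ) (r : ℝ) :
    A N (l+1) r = ∑ n ∈ Finset.Icc N ⌊r⌋₊, A N l (r / n) := by
  classical
  set Sfin : ℕ → Finset (Fin l → ℕ) := fun n => (A_set_finite hN l (r / n)).toFinset with hSfin
  have hmem : ∀ n (y : Fin l → ℕ), y ∈ Sfin n ↔
      (∀ j, N ≤ y j) ∧ ((∏ j, y j : ℕ) : ℝ) ≤ r / n := by
    intro n y
    rw [hSfin, Set.Finite.mem_toFinset]
    rfl
  have hset : {x : Fin (l+1) → ℕ | (∀ j, N ≤ x j) ∧ ((∏ j, x j : ℕ) : ℝ) ≤ r}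
      = ↑((Finset.Icc N ⌊r⌋₊).biUnion (fun n => (Sfin n).image (@Fin.cons l (fun _ => ℕ) n))) := by
    ext x
    simp only [Set.mem_setOf_eq, Finset.coe_biUnion, Set.mem_iUnion, Finset.mem_coe,
      Finset.mem_biUnion, Finset.mem_image, Finset.mem_Icc]
    constructor
    · rintro ⟨h1, h2⟩
      have hx0 : 0 < (x 0 : ℝ) := by
        have := le_trans hN (h1 0); positivity
      refine ⟨x 0, ⟨h1 0, coord_le_floor hN ⟨h1, h2⟩ 0⟩, Fin.tail x, ?_, Fin.cons_self_tail x⟩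
      rw [hmem]
      refine ⟨fun j => h1 j.succ, ?_⟩
      rw [le_div_iff₀ hx0, mul_comm]
      calc ((x 0 : ℝ)) * (∏ j : Fin l, Fin.tail x j : ℕ) = ((∏ j, x j : ℕ) : ℝ) := by
            rw [Fin.prod_univ_succ]; push_cast; rfl
        _ ≤ r := h2
    · rintro ⟨n, ⟨hn1, hn2⟩, y, hy, rfl⟩
      rw [hmem] at hy
      have hn0 : 0 < (n : ℝ) := by exact_mod_cast lt_of_lt_of_le hN hn1
      constructor
      · intro j
        refine Fin.cases ?_ ?_ j
        · rw [Fin.cons_zero]; exact hn1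
        · intro i; rw [Fin.cons_succ]; exact hy.1 i
      · have hp : (∏ j, Fin.cons n y j) = n * ∏ j, y j := Fin.prod_cons n y
        rw [hp, Nat.cast_mul]
        calc (n : ℝ) * (∏ j, y j : ℕ) ≤ (n : ℝ) * (r / n) :=
              mul_le_mul_of_nonneg_left hy.2 (le_of_lt hn0)
          _ = r := by field_simp
  rw [A, hset, Set.ncard_coe_finset]
  rw [Finset.card_biUnion]
  · refine Finset.sum_congr rfl (fun n _ => ?_)
    rw [Finset.card_image_of_injective _ (@Fin.cons_right_injective l (fun _ => ℕ) n),
      A, Set.ncard_eq_toFinset_card _ (A_set_finite hN l (r / n))]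
  · intro a _ b _ hab
    rw [Function.onFun, Finset.disjoint_left]
    rintro z hz1 hz2
    simp only [Finset.mem_image] at hz1 hz2
    obtain ⟨y1, _, rfl⟩ := hz1
    obtain ⟨y2, _, h2⟩ := hz2
    apply hab
    have := congrFun h2 0
    rw [Fin.cons_zero, Fin.cons_zero] at this
    exact this.symm

lemma sum_inv_le (hN : 1 ≤ N) {r : ℝ} (hr : 1 ≤ r) :
    ∑ n ∈ Finset.Icc N ⌊r⌋₊, (n : ℝ)⁻¹ ≤ 1 + Real.log r := by
  have h1 : ∑ n ∈ Finset.Icc N ⌊r⌋₊, (n : ℝ)⁻¹ ≤ ∑ n ∈ Finset.Icc 1 ⌊r⌋₊, (n : ℝ)⁻¹ :=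
    Finset.sum_le_sum_of_subset_of_nonneg (Finset.Icc_subset_Icc_left hN)
      (by intros; positivity)
  have h2 : (∑ n ∈ Finset.Icc 1 ⌊r⌋₊, (n : ℝ)⁻¹) = ((harmonic ⌊r⌋₊ : ℚ) : ℝ) := by
    rw [harmonic_eq_sum_Icc]; push_cast; rfl
  have h3 := harmonic_le_one_add_log ⌊r⌋₊
  have hfl : (1:ℕ) ≤ ⌊r⌋₊ := Nat.le_floor (by exact_mod_cast hr)
  have h4 : Real.log ⌊r⌋₊ ≤ Real.log r := by
    apply Real.log_le_log (by exact_mod_cast hfl) (Nat.floor_le (by linarith))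
  linarith

lemma A_le_pow (hN : 1 ≤ N) {l : ℕ} (hl : 1 ≤ l) (r : ℝ) : A N l r ≤ (⌊r⌋₊ + 1) ^ l := by
  induction l, hl using Nat.le_induction generalizing r with
  | base => rw [A_one hN, pow_one]; omega
  | succ l hl ih =>
    rw [A_succ hN]
    have hb : ∀ n ∈ Finset.Icc N ⌊r⌋₊, A N l (r / n) ≤ (⌊r⌋₊ + 1) ^ l := by
      intro n hn
      rw [Finset.mem_Icc] at hn
      refine le_trans (ih _) (Nat.pow_le_pow_left ?_ l)
      have hn1 : 1 ≤ n := le_trans hN hn.1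
      have hr0 : (0:ℝ) ≤ r := by
        by_contra h
        push_neg at h
        have : ⌊r⌋₊ = 0 := Nat.floor_of_nonpos h.le
        omega
      have hd : r / n ≤ r := div_le_self hr0 (by exact_mod_cast hn1)
      have := Nat.floor_le_floor hd
      omega
    calc ∑ n ∈ Finset.Icc N ⌊r⌋₊, A N l (r / n) ≤ ∑ n ∈ Finset.Icc N ⌊r⌋₊, (⌊r⌋₊ + 1) ^ l :=
          Finset.sum_le_sum hb
      _ = (Finset.Icc N ⌊r⌋₊).card * (⌊r⌋₊ + 1) ^ l := by rw [Finset.sum_const, smul_eq_mul]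
      _ ≤ (⌊r⌋₊ + 1) ^ (l + 1) := by
          rw [pow_succ, mul_comm ((⌊r⌋₊ + 1)^l)]
          apply Nat.mul_le_mul_right
          rw [Nat.card_Icc]; omega

section
variable {k : ℕ} {r : ℝ}

lemma contOn (k : ℕ) (r : ℝ) :
    ContinuousOn (fun t : ℝ => (Real.log r - Real.log t) ^ k / t) {t : ℝ | 0 < t} := by
  apply ContinuousOn.div
  · exact (continuousOn_const.sub (Real.continuousOn_log.mono (fun t ht => ne_of_gt ht))).pow k
  · exact continuousOn_id
  · exact fun t ht => ne_of_gt ht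

lemma f_intable (k : ℕ) (r : ℝ) {a b : ℝ} (ha : 0 < a) (hab : a ≤ b) :
    IntervalIntegrable (fun t : ℝ => (Real.log r - Real.log t) ^ k / t) MeasureTheory.volume a b := by
  apply ContinuousOn.intervalIntegrable
  apply (contOn k r).mono
  rw [Set.uIcc_of_le hab]
  intro t ht
  exact lt_of_lt_of_le ha ht.1

lemma integral_f (k : ℕ) (r : ℝ) {a b : ℝ} (ha : 0 < a) (hab : a ≤ b) :
    ∫ t in a..b, (Real.log r - Real.log t) ^ k / t
      = ((Real.log r - Real.log a) ^ (k+1) - (Real.log r - Real.log b) ^ (k+1)) / (k+1) := by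
  have hF : ∀ t ∈ Set.uIcc a b, HasDerivAt
      (fun t => -((Real.log r - Real.log t) ^ (k+1) / ((k:ℝ)+1)))
      ((Real.log r - Real.log t) ^ k / t) t := by
    intro t ht
    rw [Set.uIcc_of_le hab] at ht
    have ht0 : 0 < t := lt_of_lt_of_le ha ht.1
    have h1 : HasDerivAt (fun t : ℝ => Real.log r - Real.log t) (-t⁻¹) t :=
      (Real.hasDerivAt_log (ne_of_gt ht0)).const_sub _
    have h2 := ((h1.pow (k+1)).div_const ((k:ℝ)+1)).neg
    convert h2 using 1
    · rfl
    · rfl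
    · rfl
    have : (k + 1 : ℕ) - 1 = k := rfl
    rw [this]
    push_cast
    field_simp
  rw [intervalIntegral.integral_eq_sub_of_hasDerivAt hF (f_intable k r ha hab)]
  ring

lemma f_anti (k : ℕ) {r : ℝ} (hr : 1 ≤ r) :
    AntitoneOn (fun t : ℝ => (Real.log r - Real.log t) ^ k / t) (Set.Icc 1 r) := by
  intro s hs t ht hst
  simp only [Set.mem_Icc] at hs ht
  have hs0 : (0:ℝ) < s := lt_of_lt_of_le zero_lt_one hs.1
  have ht0 : (0:ℝ) < t := lt_of_lt_of_le zero_lt_one ht.1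
  have hXt : 0 ≤ Real.log r - Real.log t := by
    have := Real.log_le_log ht0 ht.2
    linarith
  have hXle : Real.log r - Real.log t ≤ Real.log r - Real.log s := by
    have := Real.log_le_log hs0 hst
    linarith
  exact div_le_div₀ (pow_nonneg (by linarith) k)
    (pow_le_pow_left₀ hXt hXle k) hs0 hst

lemma f_le (k : ℕ) {r t : ℝ} (ht : 1 ≤ t) (htr : t ≤ r) :
    (Real.log r - Real.log t) ^ k / t ≤ (Real.log r) ^ k := by
  have ht0 : (0:ℝ) < t := lt_of_lt_of_le zero_lt_one ht
  have hlt : 0 ≤ Real.log t := Real.log_nonneg ht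
  have hX0 : 0 ≤ Real.log r - Real.log t := by
    have := Real.log_le_log ht0 htr
    linarith
  calc (Real.log r - Real.log t) ^ k / t ≤ (Real.log r - Real.log t) ^ k / 1 := by
        apply div_le_div_of_nonneg_left (pow_nonneg hX0 k) zero_lt_one ht
      _ = (Real.log r - Real.log t) ^ k := by rw [div_one]
      _ ≤ (Real.log r) ^ k := pow_le_pow_left₀ hX0 (by linarith) k

end

lemma sum_est (N k : ℕ) (hN : 1 ≤ N) {r : ℝ} (hr : (N:ℝ) ≤ r) (hr1 : 1 ≤ r) :
    |(∑ n ∈ Finset.Icc N ⌊r⌋₊, (Real.log r - Real.log n) ^ k / n)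
      - (Real.log r) ^ (k+1) / (k+1)| ≤ (N+1) * (Real.log r) ^ k := by
  set f : ℝ → ℝ := fun t => (Real.log r - Real.log t) ^ k / t with hf
  set M := ⌊r⌋₊ with hM
  have hNM : N ≤ M := Nat.le_floor hr
  have hM1 : 1 ≤ M := le_trans hN hNM
  have hr0 : (0:ℝ) ≤ r := by linarith
  have hMr : (M:ℝ) ≤ r := Nat.floor_le hr0
  have hrM : r < M + 1 := Nat.lt_floor_add_one r
  have hN1 : (1:ℝ) ≤ N := by exact_mod_cast hN
  have hM1' : (1:ℝ) ≤ M := by exact_mod_cast hM1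
  have hlogr : 0 ≤ Real.log r := Real.log_nonneg hr1
  have hpow : (0:ℝ) ≤ (Real.log r) ^ k := pow_nonneg hlogr k
  have anti : AntitoneOn f (Set.Icc (N:ℝ) (M:ℝ)) :=
    (f_anti k hr1).mono (Set.Icc_subset_Icc hN1 hMr)
  -- integral over N..M
  have hIS : ∫ x in (N:ℝ)..(M:ℝ), f x ≤ ∑ n ∈ Finset.Ico N M, f n :=
    AntitoneOn.integral_le_sum_Ico hNM anti
  have hSI : (∑ n ∈ Finset.Ico N M, f ((n:ℝ) + 1)) ≤ ∫ x in (N:ℝ)..(M:ℝ), f x := by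
    have := AntitoneOn.sum_le_integral_Ico hNM anti
    convert this using 2 with n
    push_cast
    ring_nf
  set S := ∑ n ∈ Finset.Icc N M, f n with hS
  have hfnonneg : ∀ n : ℕ, 1 ≤ n → (n:ℝ) ≤ r → 0 ≤ f n := by
    intro n h1 h2
    have hn0 : (0:ℝ) < n := by exact_mod_cast h1
    apply div_nonneg _ hn0.le
    apply pow_nonneg
    have := Real.log_le_log hn0 h2
    linarith
  have hS1 : S = (∑ n ∈ Finset.Ico N M, f n) + f M := by
    rw [hS, ← Finset.Ico_add_one_right_eq_Icc, Finset.sum_Ico_succ_top hNM]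
  have hshift : (∑ n ∈ Finset.Ico N M, f ((n:ℝ) + 1)) = ∑ n ∈ Finset.Ico (N+1) (M+1), f n := by
    rw [Finset.sum_Ico_eq_sum_range, Finset.sum_Ico_eq_sum_range]
    have : M + 1 - (N + 1) = M - N := by omega
    rw [this]
    refine Finset.sum_congr rfl (fun i _ => ?_)
    push_cast
    ring_nf
  have hS2 : S = f N + ∑ n ∈ Finset.Ico N M, f ((n:ℝ) + 1) := by
    rw [hshift, hS, ← Finset.Ico_add_one_right_eq_Icc, Finset.sum_eq_sum_Ico_succ_bot (by omega) _]
  set I := ∫ x in (N:ℝ)..(M:ℝ), f x with hI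
  have hfM : 0 ≤ f M := hfnonneg M hM1 hMr
  have hIleS : I ≤ S := by
    rw [hS1]; linarith
  have hSle : S ≤ f N + I := by
    rw [hS2]; linarith
  -- value of full integral
  have hJ : ∫ x in (1:ℝ)..r, f x = (Real.log r) ^ (k+1) / (k+1) := by
    rw [hf, integral_f k r zero_lt_one hr1, Real.log_one, sub_zero, sub_self,
      zero_pow (Nat.succ_ne_zero k)]
    push_cast
    ring
  have hadd1 : (∫ x in (1:ℝ)..(N:ℝ), f x) + I = ∫ x in (1:ℝ)..(M:ℝ), f x :=
    intervalIntegral.integral_add_adjacent_intervals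
      (f_intable k r zero_lt_one hN1) (f_intable k r (by linarith) (by exact_mod_cast hNM))
  have hadd2 : (∫ x in (1:ℝ)..(M:ℝ), f x) + (∫ x in (M:ℝ)..r, f x) = ∫ x in (1:ℝ)..r, f x :=
    intervalIntegral.integral_add_adjacent_intervals
      (f_intable k r zero_lt_one hM1') (f_intable k r (by linarith) hMr)
  -- bounds on the two edge integrals
  have hbound : ∀ x : ℝ, 1 ≤ x → x ≤ r → ‖f x‖ ≤ (Real.log r) ^ k := by
    intro x h1 h2
    rw [Real.norm_eq_abs, abs_of_nonneg]
    · exact f_le k h1 h2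
    · apply div_nonneg _ (by linarith)
      apply pow_nonneg
      have := Real.log_le_log (by linarith : (0:ℝ) < x) h2
      linarith
  have h1N : ∫ x in (1:ℝ)..(N:ℝ), f x ≤ (Real.log r) ^ k * ((N:ℝ) - 1) := by
    have := intervalIntegral.norm_integral_le_of_norm_le_const
      (C := (Real.log r) ^ k) (f := f) (a := 1) (b := (N:ℝ)) ?_
    · rw [Real.norm_eq_abs] at this
      have h2 : |(N:ℝ) - 1| = (N:ℝ) - 1 := abs_of_nonneg (by linarith)
      rw [h2] at this
      exact le_trans (le_abs_self _) this
    · intro x hx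
      rw [Set.uIoc_of_le hN1] at hx
      exact hbound x hx.1.le (le_trans hx.2 hr)
  have h1N0 : 0 ≤ ∫ x in (1:ℝ)..(N:ℝ), f x := by
    apply intervalIntegral.integral_nonneg hN1
    intro u hu
    have hu1 : 1 ≤ u := hu.1
    apply div_nonneg _ (by linarith)
    apply pow_nonneg
    have := Real.log_le_log (by linarith : (0:ℝ) < u) (le_trans hu.2 hr)
    linarith
  have hMr' : ∫ x in (M:ℝ)..r, f x ≤ (Real.log r) ^ k * 1 := by
    have := intervalIntegral.norm_integral_le_of_norm_le_const
      (C := (Real.log r) ^ k) (f := f) (a := (M:ℝ)) (b := r) ?_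
    · rw [Real.norm_eq_abs] at this
      have h2 : |r - (M:ℝ)| ≤ 1 := by
        rw [abs_of_nonneg (by linarith)]; linarith
      refine le_trans (le_abs_self _) (le_trans this ?_)
      exact mul_le_mul_of_nonneg_left h2 hpow
    · intro x hx
      rw [Set.uIoc_of_le hMr] at hx
      exact hbound x (le_trans hM1' hx.1.le) hx.2
  have hMr0 : 0 ≤ ∫ x in (M:ℝ)..r, f x := by
    apply intervalIntegral.integral_nonneg hMr
    intro u hu
    apply div_nonneg _ (by linarith [hu.1])
    apply pow_nonneg
    have hu0 : (0:ℝ) < u := by linarith [hu.1]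
    have := Real.log_le_log hu0 hu.2
    linarith
  have hfN : f N ≤ (Real.log r) ^ k := f_le k hN1 hr
  have hcast : ((M:ℕ):ℝ) = (M:ℝ) := rfl
  rw [abs_le]
  constructor
  · -- J - S ≤ ... : need -(..) ≤ S - J
    nlinarith [hIleS, hJ, hadd1, hadd2, h1N, hMr']
  · nlinarith [hSle, hJ, hadd1, hadd2, h1N0, hMr0, hfN]

noncomputable def EB (l : ℕ) (x : ℝ) : ℝ := if l = 1 then 1 else x * (1 + Real.log x) ^ (l - 2)

lemma EB_one_le {l : ℕ} {x : ℝ} (hx : 1 ≤ x) : 1 ≤ EB l x := by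
  rw [EB]
  split
  · exact le_refl 1
  · have h1 : (1:ℝ) ≤ 1 + Real.log x := by
      have := Real.log_nonneg hx; linarith
    have h2 := one_le_pow₀ h1 (n := l - 2)
    nlinarith

lemma A_main (N : ℕ) (hN : 1 ≤ N) {l : ℕ} (hl : 1 ≤ l) :
    ∃ C : ℝ, 0 < C ∧ ∀ x : ℝ, 1 ≤ x →
      |(A N l x : ℝ) - x * (Real.log x) ^ (l - 1) / (Nat.factorial (l - 1))| ≤ C * EB l x := by
  induction l, hl using Nat.le_induction with
  | base =>
    refine ⟨(N:ℝ) + 1, by positivity, fun x hx => ?_⟩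
    rw [EB, if_pos rfl, mul_one]
    simp only [Nat.sub_self, pow_zero, Nat.factorial_zero, Nat.cast_one, div_one, mul_one]
    rw [A_one hN]
    have hx0 : (0:ℝ) ≤ x := by linarith
    have hfl : (⌊x⌋₊ : ℝ) ≤ x := Nat.floor_le hx0
    have hfl2 : x < ⌊x⌋₊ + 1 := Nat.lt_floor_add_one x
    have hN1 : (1:ℝ) ≤ N := by exact_mod_cast hN
    rcases le_or_gt N (⌊x⌋₊ + 1) with h | h
    · rw [Nat.cast_sub h]
      push_cast
      rw [abs_le]
      constructor <;> linarith
    · have h0 : ⌊x⌋₊ + 1 - N = 0 := by omega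
      rw [h0]
      have hxN : x ≤ N := by
        have : (⌊x⌋₊:ℝ) + 1 ≤ N := by exact_mod_cast h.le
        linarith
      rw [Nat.cast_zero, zero_sub, abs_neg, abs_of_nonneg hx0]
      linarith
  | succ l hl ih =>
    obtain ⟨C, hC, hIH⟩ := ih
    set R₀ : ℝ := max (N:ℝ) 3 with hR₀
    have hR₀3 : (3:ℝ) ≤ R₀ := le_max_right _ _
    have hR₀N : (N:ℝ) ≤ R₀ := le_max_left _ _
    have hR₀1 : (1:ℝ) ≤ R₀ := by linarith
    set D : ℝ := (R₀ + 1) ^ (l+1) + R₀ * (Real.log R₀) ^ l with hD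
    have hD0 : 0 < D := by
      have h1 : (0:ℝ) < (R₀+1)^(l+1) := by positivity
      have h2 : (0:ℝ) ≤ R₀ * (Real.log R₀)^l := by
        have := Real.log_nonneg hR₀1
        positivity
      linarith
    refine ⟨max (C + ((N:ℝ)+1)) D, lt_max_of_lt_left (by positivity), fun x hx => ?_⟩
    have hEB : EB (l+1) x = x * (1 + Real.log x) ^ (l-1) := by
      rw [EB, if_neg (by omega)]
      congr 1
    have hEB1 : 1 ≤ EB (l+1) x := EB_one_le hx
    have hEB0 : 0 ≤ EB (l+1) x := by linarith
    have hgoalsimp : (l + 1 - 1) = l := by omega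
    rw [hgoalsimp]
    by_cases hx3 : R₀ ≤ x
    · -- large x
      have hxN : (N:ℝ) ≤ x := le_trans hR₀N hx3
      have hx1 : (1:ℝ) ≤ x := le_trans hR₀1 hx3
      have hlogx : 0 ≤ Real.log x := Real.log_nonneg hx1
      have h1l : (0:ℝ) ≤ 1 + Real.log x := by linarith
      have hx0 : (0:ℝ) < x := by linarith
      set M := ⌊x⌋₊ with hMdef
      have hNM : N ≤ M := Nat.le_floor hxN
      have hMx : (M:ℝ) ≤ x := Nat.floor_le (by linarith)
      have hn_facts : ∀ n ∈ Finset.Icc N M, 1 ≤ (n:ℝ) ∧ (n:ℝ) ≤ x ∧ 1 ≤ x / n := by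
        intro n hn
        rw [Finset.mem_Icc] at hn
        have h1 : (1:ℝ) ≤ n := by exact_mod_cast le_trans hN hn.1
        have h2 : (n:ℝ) ≤ M := by exact_mod_cast hn.2
        have h2' : (n:ℝ) ≤ x := le_trans h2 hMx
        exact ⟨h1, h2', (one_le_div (by linarith)).2 h2'⟩
      set m : ℝ → ℝ := fun y => y * (Real.log y)^(l-1) / (Nat.factorial (l-1)) with hm
      have hk : l - 1 + 1 = l := by omega
      have hrec : (A N (l+1) x : ℝ) = ∑ n ∈ Finset.Icc N M, (A N l (x / n) : ℝ) := by
        rw [A_succ hN]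
        push_cast
        rfl
      have htri : |(A N (l+1) x : ℝ) - x * (Real.log x)^l / (Nat.factorial l)|
          ≤ (∑ n ∈ Finset.Icc N M, |(A N l (x/n) : ℝ) - m (x/n)|)
            + |(∑ n ∈ Finset.Icc N M, m (x/n)) - x * (Real.log x)^l / (Nat.factorial l)| := by
        rw [hrec]
        refine le_trans (abs_sub_le _ (∑ n ∈ Finset.Icc N M, m (x/n)) _) ?_
        apply add_le_add_left
        rw [← Finset.sum_sub_distrib]
        exact Finset.abs_sum_le_sum_abs _ _
      have hterm : ∀ n ∈ Finset.Icc N M, |(A N l (x/n) : ℝ) - m (x/n)| ≤ C * EB l (x/n) :=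
        fun n hn => hIH _ (hn_facts n hn).2.2
      have hEBsum : (∑ n ∈ Finset.Icc N M, EB l (x/n)) ≤ x * (1 + Real.log x) ^ (l-1) := by
        by_cases hl1 : l = 1
        · subst hl1
          have hEBone : ∀ n : ℕ, EB 1 (x / n) = (1:ℝ) := fun n => if_pos rfl
          rw [Finset.sum_congr rfl (fun n _ => hEBone n), Finset.sum_const, nsmul_eq_mul,
            mul_one, Nat.card_Icc]
          simp only [Nat.sub_self, pow_zero, mul_one]
          calc ((M + 1 - N : ℕ) : ℝ) ≤ (M:ℝ) := by
                have : M + 1 - N ≤ M := by omega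
                exact_mod_cast this
            _ ≤ x := hMx
        · have hl2 : 2 ≤ l := by omega
          have hstep : ∀ n ∈ Finset.Icc N M, EB l (x/n) ≤ x * (1 + Real.log x)^(l-2) * (n:ℝ)⁻¹ := by
            intro n hn
            obtain ⟨h1, h2, h3⟩ := hn_facts n hn
            rw [EB, if_neg hl1]
            have hlog2 : Real.log (x/n) ≤ Real.log x :=
              Real.log_le_log (by linarith) (div_le_self (by linarith) h1)
            have hlog3 : 0 ≤ Real.log (x/n) := Real.log_nonneg h3
            have hp : (1 + Real.log (x/n))^(l-2) ≤ (1 + Real.log x)^(l-2) :=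
              pow_le_pow_left₀ (by linarith) (by linarith) _
            calc x/n * (1 + Real.log (x/n))^(l-2) ≤ x/n * (1 + Real.log x)^(l-2) := by
                  apply mul_le_mul_of_nonneg_left hp (by positivity)
              _ = x * (1 + Real.log x)^(l-2) * (n:ℝ)⁻¹ := by
                  field_simp
          calc (∑ n ∈ Finset.Icc N M, EB l (x/n))
              ≤ ∑ n ∈ Finset.Icc N M, x * (1 + Real.log x)^(l-2) * (n:ℝ)⁻¹ :=
                Finset.sum_le_sum hstep
            _ = x * (1 + Real.log x)^(l-2) * ∑ n ∈ Finset.Icc N M, (n:ℝ)⁻¹ := by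
                rw [← Finset.mul_sum]
            _ ≤ x * (1 + Real.log x)^(l-2) * (1 + Real.log x) := by
                apply mul_le_mul_of_nonneg_left (sum_inv_le hN hx1)
                exact mul_nonneg hx0.le (pow_nonneg h1l _)
            _ = x * (1 + Real.log x)^(l-1) := by
                rw [mul_assoc, ← pow_succ]
                have : l - 2 + 1 = l - 1 := by omega
                rw [this]
      have hsum1 : (∑ n ∈ Finset.Icc N M, |(A N l (x/n) : ℝ) - m (x/n)|)
          ≤ C * (x * (1 + Real.log x)^(l-1)) := by
        calc (∑ n ∈ Finset.Icc N M, |(A N l (x/n) : ℝ) - m (x/n)|)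
            ≤ ∑ n ∈ Finset.Icc N M, C * EB l (x/n) := Finset.sum_le_sum hterm
          _ = C * ∑ n ∈ Finset.Icc N M, EB l (x/n) := by rw [← Finset.mul_sum]
          _ ≤ C * (x * (1 + Real.log x)^(l-1)) := mul_le_mul_of_nonneg_left hEBsum hC.le
      -- main term
      set T := ∑ n ∈ Finset.Icc N M, (Real.log x - Real.log (n:ℝ))^(l-1) / (n:ℝ) with hT
      have hsumm : (∑ n ∈ Finset.Icc N M, m (x/n)) = x / (Nat.factorial (l-1)) * T := by
        rw [hT, Finset.mul_sum]
        refine Finset.sum_congr rfl (fun n hn => ?_)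
        obtain ⟨h1, h2, h3⟩ := hn_facts n hn
        rw [hm]
        simp only []
        rw [Real.log_div (by linarith : x ≠ 0) (by linarith : (n:ℝ) ≠ 0)]
        ring
      have hest := sum_est N (l-1) hN hxN hx1
      rw [hk] at hest
      have hl0 : ((l:ℕ):ℝ) ≠ 0 := by
        have : 0 < l := by omega
        positivity
      have hfl0 : (0:ℝ) < (Nat.factorial (l-1) : ℝ) := by exact_mod_cast Nat.factorial_pos _
      have hfac : ((Nat.factorial l : ℕ) : ℝ) = (l:ℝ) * (Nat.factorial (l-1) : ℝ) := by
        conv_lhs => rw [← hk]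
        rw [Nat.factorial_succ, hk]
        push_cast
        ring
      have hcastl : ((l - 1 : ℕ) : ℝ) + 1 = (l : ℝ) := by
        have h := congrArg (fun j : ℕ => (j : ℝ)) hk
        push_cast at h
        linarith
      rw [hcastl] at hest
      have hfac1 : (1:ℝ) ≤ (Nat.factorial (l-1) : ℝ) := by
        exact_mod_cast Nat.one_le_iff_ne_zero.mpr (Nat.factorial_ne_zero _)
      have hmain : |(∑ n ∈ Finset.Icc N M, m (x/n)) - x * (Real.log x)^l / (Nat.factorial l)|
          ≤ ((N:ℝ)+1) * (x * (1 + Real.log x)^(l-1)) := by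
        rw [hsumm]
        have heq : x / (Nat.factorial (l-1)) * T - x * (Real.log x)^l / (Nat.factorial l)
            = x / (Nat.factorial (l-1)) * (T - (Real.log x)^l / (l:ℝ)) := by
          rw [hfac]
          field_simp
        rw [heq, abs_mul, abs_of_nonneg (by positivity : (0:ℝ) ≤ x / (Nat.factorial (l-1) : ℝ))]
        have hpowle : (Real.log x)^(l-1) ≤ (1 + Real.log x)^(l-1) :=
          pow_le_pow_left₀ hlogx (by linarith) _
        calc x / (Nat.factorial (l-1)) * |T - (Real.log x)^l / (l:ℝ)|
            ≤ x / (Nat.factorial (l-1)) * (((N:ℝ)+1) * (Real.log x)^(l-1)) :=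
              mul_le_mul_of_nonneg_left hest (by positivity)
          _ ≤ x * (((N:ℝ)+1) * (Real.log x)^(l-1)) := by
              apply mul_le_mul_of_nonneg_right (div_le_self hx0.le hfac1)
              positivity
          _ ≤ ((N:ℝ)+1) * (x * (1 + Real.log x)^(l-1)) := by
              rw [show x * (((N:ℝ)+1) * (Real.log x)^(l-1)) = ((N:ℝ)+1) * (x * (Real.log x)^(l-1)) by ring]
              apply mul_le_mul_of_nonneg_left _ (by positivity)
              exact mul_le_mul_of_nonneg_left hpowle hx0.le
      rw [hEB]
      calc |(A N (l+1) x : ℝ) - x * (Real.log x)^l / (Nat.factorial l)|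
          ≤ (∑ n ∈ Finset.Icc N M, |(A N l (x/n) : ℝ) - m (x/n)|)
            + |(∑ n ∈ Finset.Icc N M, m (x/n)) - x * (Real.log x)^l / (Nat.factorial l)| := htri
        _ ≤ C * (x * (1 + Real.log x)^(l-1)) + ((N:ℝ)+1) * (x * (1 + Real.log x)^(l-1)) :=
            add_le_add hsum1 hmain
        _ = (C + ((N:ℝ)+1)) * (x * (1 + Real.log x)^(l-1)) := by ring
        _ ≤ max (C + ((N:ℝ)+1)) D * (x * (1 + Real.log x)^(l-1)) := by
            apply mul_le_mul_of_nonneg_right (le_max_left _ _)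
            exact mul_nonneg hx0.le (pow_nonneg h1l _)
    · -- small x
      push_neg at hx3
      have hlogx : 0 ≤ Real.log x := Real.log_nonneg hx
      have hA : (A N (l+1) x : ℝ) ≤ (x+1)^(l+1) := by
        have h1 := A_le_pow hN (show 1 ≤ l+1 by omega) x
        have h2 : ((A N (l+1) x : ℕ) : ℝ) ≤ (((⌊x⌋₊ + 1 : ℕ)) : ℝ)^(l+1) := by
          exact_mod_cast h1
        refine le_trans h2 ?_
        apply pow_le_pow_left₀ (by positivity)
        push_cast
        have := Nat.floor_le (by linarith : (0:ℝ) ≤ x)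
        linarith
      have hm : x * (Real.log x)^l / (Nat.factorial l) ≤ R₀ * (Real.log R₀)^l := by
        have hfac : (1:ℝ) ≤ (Nat.factorial l : ℝ) := by
          exact_mod_cast Nat.one_le_iff_ne_zero.mpr (Nat.factorial_ne_zero l)
        have hlogle : Real.log x ≤ Real.log R₀ := Real.log_le_log (by linarith) hx3.le
        calc x * (Real.log x)^l / (Nat.factorial l) ≤ x * (Real.log x)^l := by
              apply div_le_self (by positivity) hfac
          _ ≤ R₀ * (Real.log R₀)^l := by
              apply mul_le_mul hx3.le (pow_le_pow_left₀ hlogx hlogle l) (by positivity) (by linarith)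
      have hm0 : 0 ≤ x * (Real.log x)^l / (Nat.factorial l) := by positivity
      have hA0 : (0:ℝ) ≤ (A N (l+1) x : ℝ) := by positivity
      have hxp : (x+1)^(l+1) ≤ (R₀+1)^(l+1) := by
        apply pow_le_pow_left₀ (by linarith) (by linarith)
      have hDle : D ≤ max (C + ((N:ℝ)+1)) D := le_max_right _ _
      have habs : |(A N (l+1) x : ℝ) - x * (Real.log x)^l / (Nat.factorial l)| ≤ D := by
        rw [abs_le]
        constructor <;> nlinarith
      calc |(A N (l+1) x : ℝ) - x * (Real.log x)^l / (Nat.factorial l)| ≤ D := habs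
        _ ≤ max (C + ((N:ℝ)+1)) D * 1 := by
            rw [mul_one]; exact hDle
        _ ≤ max (C + ((N:ℝ)+1)) D * EB (l+1) x := by
            apply mul_le_mul_of_nonneg_left hEB1
            exact le_trans hD0.le hDle

theorem stmt_3 (N l : ℕ) (hN : 1 ≤ N) (hl : 1 ≤ l) :
    Filter.Tendsto (fun r : ℝ => (A N l r : ℝ) / (r * (Real.log r) ^ (l - 1)))
      Filter.atTop (nhds (1 / (Nat.factorial (l - 1)))) := by
  obtain ⟨C, hC, hbd⟩ := A_main N hN hl
  rw [← tendsto_sub_nhds_zero_iff]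
  apply squeeze_zero_norm' (a := fun r : ℝ => C * EB l r / (r * (Real.log r) ^ (l - 1)))
  · filter_upwards [eventually_ge_atTop (2:ℝ)] with r hr
    have hr1 : (1:ℝ) ≤ r := by linarith
    have hlog : 0 < Real.log r := Real.log_pos (by linarith)
    have hden : 0 < r * (Real.log r) ^ (l - 1) := by positivity
    have key := hbd r hr1
    have heq : (A N l r : ℝ) / (r * Real.log r ^ (l-1)) - 1 / (Nat.factorial (l-1))
        = ((A N l r : ℝ) - r * (Real.log r) ^ (l-1) / (Nat.factorial (l-1)))
          / (r * Real.log r ^ (l-1)) := by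
      have hfac : (0:ℝ) < (Nat.factorial (l-1) : ℝ) := by exact_mod_cast Nat.factorial_pos _
      field_simp
    rw [Real.norm_eq_abs, heq, abs_div, abs_of_pos hden]
    exact (div_le_div_iff_of_pos_right hden).2 key
  · rcases eq_or_lt_of_le hl with h1 | h2
    · -- l = 1
      subst h1
      have hg : (fun r : ℝ => C * EB 1 r / (r * (Real.log r) ^ (1 - 1)))
          = fun r : ℝ => C / r := by
        funext r
        rw [EB, if_pos rfl, mul_one, Nat.sub_self, pow_zero, mul_one]
      rw [hg]
      exact tendsto_const_nhds.div_atTop tendsto_id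
    · have hl2 : 2 ≤ l := h2
      set h : ℝ → ℝ := fun u => C * ((1 + u) / u) ^ (l - 2) * u⁻¹ with hh
      have hht : Filter.Tendsto h Filter.atTop (nhds 0) := by
        have t1 : Filter.Tendsto (fun u : ℝ => (1 + u) / u) Filter.atTop (nhds 1) := by
          have : Filter.Tendsto (fun u : ℝ => 1 / u + 1) Filter.atTop (nhds (0 + 1)) :=
            (tendsto_const_nhds.div_atTop tendsto_id).add tendsto_const_nhds
        
          rw [zero_add] at this
          refine this.congr' ?_
          filter_upwards [eventually_gt_atTop (0:ℝ)] with u hu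
          field_simp
        have t2 : Filter.Tendsto (fun u : ℝ => C * ((1 + u) / u) ^ (l - 2) * u⁻¹)
            Filter.atTop (nhds (C * 1 ^ (l - 2) * 0)) :=
          (tendsto_const_nhds.mul (t1.pow (l - 2))).mul tendsto_inv_atTop_zero
        rw [hh]
        convert t2 using 2
        ring
      have hcomp := hht.comp (Real.tendsto_log_atTop)
      refine hcomp.congr' ?_
      filter_upwards [eventually_ge_atTop (2:ℝ)] with r hr
      have hr1 : (1:ℝ) < r := by linarith
      have hu : 0 < Real.log r := Real.log_pos hr1
      have hr0 : (0:ℝ) < r := by linarith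
      show C * ((1 + Real.log r) / Real.log r) ^ (l - 2) * (Real.log r)⁻¹
          = C * EB l r / (r * (Real.log r) ^ (l - 1))
      rw [EB, if_neg (by omega), div_pow]
      have hpow : (Real.log r) ^ (l - 1) = (Real.log r) ^ (l - 2) * Real.log r := by
        rw [← pow_succ]
        congr 1
        omega
      rw [hpow]
      field_simp
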